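/- A monic real polynomial f of degree 4 is the characteristic polynomial of some derivation of the Lie algebra rh₃ = h₃ × ℝ if and only if there exist real numbers s, v and p such that f = (X − s)(X − v)(X² − sX + p). -/

import Mathlib

set_option linter.unusedTactic false
set_option linter.unnecessarySeqFocus false
set_option linter.unreachableTactic false

open Polynomial

/-- The 3-dimensional Heisenberg Lie algebra `h₃`: the real vector space `Fin 3 → ℝ`
with basis `e₁, e₂, e₃` and only nonzero bracket `⁅e₁, e₂⁆ = e₃`. -/
def H3 : Type := Fin 3 → ℝ

noncomputable instance : AddCommGroup H3 := Pi.addCommGroup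
noncomputable instance : Module ℝ H3 := Pi.module _ _ _
instance : FiniteDimensional ℝ H3 := inferInstanceAs (FiniteDimensional ℝ (Fin 3 → ℝ))

lemma H3.add_apply (x y : H3) (i : Fin 3) : (x + y) i = x i + y i := rfl
lemma H3.smul_apply (r : ℝ) (x : H3) (i : Fin 3) : (r • x) i = r * x i := rfl

noncomputable instance : LieRing H3 :=
  { (inferInstance : AddCommGroup H3) with
    bracket := fun x y => ![0, 0, x 0 * y 1 - x 1 * y 0]
    add_lie := by
      intro x y z
      show (![_,_,_] : Fin 3 → ℝ) = (![_,_,_] : H3) + (![_,_,_] : H3)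
      funext i
      fin_cases i <;> simp [H3.add_apply] <;> ring
    lie_add := by
      intro x y z
      show (![_,_,_] : Fin 3 → ℝ) = (![_,_,_] : H3) + (![_,_,_] : H3)
      funext i
      fin_cases i <;> simp [H3.add_apply] <;> ring
    lie_self := by
      intro x
      show (![_,_,_] : Fin 3 → ℝ) = 0
      funext i
      fin_cases i <;> simp <;> ring
    leibniz_lie := by
      intro x y z
      show (![_,_,_] : Fin 3 → ℝ) = (![_,_,_] : H3) + (![_,_,_] : H3)
      funext i
      fin_cases i <;> simp [H3.add_apply] <;> ring }

noncomputable instance : LieAlgebra ℝ H3 :=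
  { lie_smul := by
      intro r x y
      show (![_,_,_] : Fin 3 → ℝ) = r • (![_,_,_] : H3)
      funext i
      fin_cases i <;> simp [H3.smul_apply] <;> ring }

/-- `rh₃ := h₃ × ℝ`, the product Lie algebra of the Heisenberg Lie algebra `h₃` with the
1-dimensional abelian Lie algebra `ℝ`. -/
def RH3 : Type := H3 × ℝ

noncomputable instance : AddCommGroup RH3 := inferInstanceAs (AddCommGroup (H3 × ℝ))
noncomputable instance : Module ℝ RH3 := inferInstanceAs (Module ℝ (H3 × ℝ))
instance : FiniteDimensional ℝ RH3 := inferInstanceAs (FiniteDimensional ℝ (H3 × ℝ))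

noncomputable instance : LieRing RH3 :=
  { (inferInstance : AddCommGroup RH3) with
    bracket := fun x y => (⁅x.1, y.1⁆, 0)
    add_lie := by
      intro x y z
      show (⁅x.1 + y.1, z.1⁆, (0:ℝ)) = (⁅x.1, z.1⁆ + ⁅y.1, z.1⁆, 0 + 0)
      simp [add_lie]
    lie_add := by
      intro x y z
      show (⁅x.1, y.1 + z.1⁆, (0:ℝ)) = (⁅x.1, y.1⁆ + ⁅x.1, z.1⁆, 0 + 0)
      simp [lie_add]
    lie_self := by
      intro x
      show (⁅x.1, x.1⁆, (0:ℝ)) = (0, 0)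
      simp
    leibniz_lie := by
      intro x y z
      show (⁅x.1, ⁅y.1, z.1⁆⁆, (0:ℝ)) = (⁅⁅x.1, y.1⁆, z.1⁆ + ⁅y.1, ⁅x.1, z.1⁆⁆, 0 + 0)
      rw [← leibniz_lie]
      simp }

noncomputable instance : LieAlgebra ℝ RH3 :=
  { lie_smul := by
      intro r x y
      show (⁅x.1, r • y.1⁆, (0:ℝ)) = (r • ⁅x.1, y.1⁆, r • (0:ℝ))
      simp }


namespace RH3Aux

lemma det_fin_four' {R : Type*} [CommRing R] (M : Matrix (Fin 4) (Fin 4) R) :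
    M.det =
      M 0 0 * (M 1 1 * (M 2 2 * M 3 3 - M 2 3 * M 3 2) - M 1 2 * (M 2 1 * M 3 3 - M 2 3 * M 3 1) +
        M 1 3 * (M 2 1 * M 3 2 - M 2 2 * M 3 1)) -
      M 0 1 * (M 1 0 * (M 2 2 * M 3 3 - M 2 3 * M 3 2) - M 1 2 * (M 2 0 * M 3 3 - M 2 3 * M 3 0) +
        M 1 3 * (M 2 0 * M 3 2 - M 2 2 * M 3 0)) +
      M 0 2 * (M 1 0 * (M 2 1 * M 3 3 - M 2 3 * M 3 1) - M 1 1 * (M 2 0 * M 3 3 - M 2 3 * M 3 0) +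
        M 1 3 * (M 2 0 * M 3 1 - M 2 1 * M 3 0)) -
      M 0 3 * (M 1 0 * (M 2 1 * M 3 2 - M 2 2 * M 3 1) - M 1 1 * (M 2 0 * M 3 2 - M 2 2 * M 3 0) +
        M 1 2 * (M 2 0 * M 3 1 - M 2 1 * M 3 0)) := by
  simp [Matrix.det_succ_row_zero, Fin.sum_univ_succ, Matrix.det_fin_three, Fin.succAbove,
    show (Fin.succ 2 : Fin 4) = 3 from rfl, show ((Fin.castSucc 2) : Fin 4) = 2 from rfl,
    show ((1:Fin 4) < 3) from by decide]
  ring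

lemma charpoly_formula (a b c d x y z w u v : ℝ) :
    (!![a,c,0,0; b,d,0,0; x,z,a+d,u; y,w,0,v] : Matrix (Fin 4) (Fin 4) ℝ).charpoly
    = (X - C (a+d)) * (X - C v) * (X^2 - C (a+d) * X + C (a*d - c*b)) := by
  rw [Matrix.charpoly, det_fin_four']
  simp [Matrix.charmatrix_apply, Matrix.diagonal]
  ring

lemma H3.zero_apply (i : Fin 3) : (0 : H3) i = 0 := rfl
lemma H3.sub_apply (x y : H3) (i : Fin 3) : (x - y) i = x i - y i := rfl
lemma RH3.mk_sub (x y : H3) (t u : ℝ) : ((x, t) : RH3) - (y, u) = (x - y, t - u) := rfl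
lemma RH3.smul_mk (r : ℝ) (x : H3) (t : ℝ) : r • ((x, t) : RH3) = ((r • x : H3), r * t) := rfl
lemma RH3.fst_zero : (0 : RH3).1 = 0 := rfl

noncomputable def phi : RH3 ≃ₗ[ℝ] (Fin 4 → ℝ) where
  toFun x := ![x.1 0, x.1 1, x.1 2, x.2]
  invFun f := (![f 0, f 1, f 2], f 3)
  map_add' x y := by funext i; fin_cases i <;> rfl
  map_smul' r x := by funext i; fin_cases i <;> rfl
  left_inv x := by
    refine Prod.ext ?_ rfl
    funext i; fin_cases i <;> rfl
  right_inv f := by funext i; fin_cases i <;> rfl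

lemma phi_apply (m : RH3) : phi m = ![m.1 0, m.1 1, m.1 2, m.2] := rfl

noncomputable def bas : Module.Basis (Fin 4) ℝ RH3 := Module.Basis.ofEquivFun phi

lemma bas_apply (i : Fin 4) :
    bas i = (![((![1,0,0] : H3), (0:ℝ)), ((![0,1,0] : H3), (0:ℝ)),
      ((![0,0,1] : H3), (0:ℝ)), ((0 : H3), (1:ℝ))] : Fin 4 → RH3) i := by
  have h2 : bas i = phi.symm (Pi.single i 1) := by
    rw [bas, Module.Basis.coe_ofEquivFun]
  rw [h2]
  apply phi.injective
  rw [LinearEquiv.apply_symm_apply]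
  funext j
  fin_cases i <;> fin_cases j <;>
    simp [phi_apply, Pi.single_apply, H3.zero_apply] <;> rfl

lemma toMatrix_entry (L : RH3 →ₗ[ℝ] RH3) (i j : Fin 4) :
    LinearMap.toMatrix bas bas L i j = phi (L (bas j)) i := by
  rw [LinearMap.toMatrix_apply, bas, Module.Basis.ofEquivFun_repr_apply]

lemma bracket_def (x y : RH3) : ⁅x, y⁆ = ((![0, 0, x.1 0 * y.1 1 - x.1 1 * y.1 0] : H3), (0:ℝ)) :=
  rfl

/-- The model derivation with parameters `s`, `v`, `p`. -/
noncomputable def Dmap (s v p : ℝ) : RH3 →ₗ[ℝ] RH3 where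
  toFun m := ((![-p * m.1 1, m.1 0 + s * m.1 1, s * m.1 2] : H3), v * m.2)
  map_add' m n := by
    refine Prod.ext (funext fun i => ?_)
      (show v * (m.2 + n.2) = v * m.2 + v * n.2 by ring)
    fin_cases i
    · show -p * (m.1 1 + n.1 1) = -p * m.1 1 + -p * n.1 1; ring
    · show (m.1 0 + n.1 0) + s * (m.1 1 + n.1 1) = (m.1 0 + s * m.1 1) + (n.1 0 + s * n.1 1); ring
    · show s * (m.1 2 + n.1 2) = s * m.1 2 + s * n.1 2; ring
  map_smul' r m := by
    refine Prod.ext (funext fun i => ?_)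
      (show v * (r * m.2) = r * (v * m.2) by ring)
    fin_cases i
    · show -p * (r * m.1 1) = r * (-p * m.1 1); ring
    · show r * m.1 0 + s * (r * m.1 1) = r * (m.1 0 + s * m.1 1); ring
    · show s * (r * m.1 2) = r * (s * m.1 2); ring

lemma Dmap_apply (s v p : ℝ) (m : RH3) :
    Dmap s v p m = ((![-p * m.1 1, m.1 0 + s * m.1 1, s * m.1 2] : H3), v * m.2) := rfl

lemma Dmap_leibniz (s v p : ℝ) (m n : RH3) :
    Dmap s v p ⁅m, n⁆ = ⁅m, Dmap s v p n⁆ - ⁅n, Dmap s v p m⁆ := by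
  erw [bracket_def m n, bracket_def m _, bracket_def n _, Dmap_apply, Dmap_apply,
    RH3.mk_sub]
  refine Prod.ext ?_ (by show v * 0 = 0 - 0; ring)
  funext i
  fin_cases i <;> simp [H3.sub_apply, Dmap_apply] <;> erw [H3.sub_apply] <;> simp <;> ring

end RH3Aux

open RH3Aux

/-- A monic real polynomial `f` of degree 4 is the characteristic polynomial of some
derivation of `rh₃ = h₃ × ℝ` if and only if
`f = (X - s) * (X - v) * (X² - s*X + p)` for some real numbers `s`, `v` and `p`. -/
theorem charpoly_derivation_rh3_iff (f : Polynomial ℝ) (hf : f.Monic)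
    (hdeg : f.natDegree = 4) :
    (∃ D : LieDerivation ℝ RH3 RH3, LinearMap.charpoly D.toLinearMap = f) ↔
      ∃ s v p : ℝ, f = (X - C s) * (X - C v) * (X ^ 2 - C s * X + C p) := by
  classical
  constructor
  · rintro ⟨D, hD⟩
    set L := D.toLinearMap with hL
    set M := LinearMap.toMatrix bas bas L with hM
    have hb0 : bas 0 = ((![1,0,0] : H3), (0:ℝ)) := bas_apply 0
    have hb1 : bas 1 = ((![0,1,0] : H3), (0:ℝ)) := bas_apply 1
    have hb2 : bas 2 = ((![0,0,1] : H3), (0:ℝ)) := bas_apply 2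
    have hb3 : bas 3 = ((0 : H3), (1:ℝ)) := bas_apply 3
    have hsmul2 : ∀ r : ℝ, r • bas 2 = ((![0,0,r] : H3), (0:ℝ)) := by
      intro r
      erw [hb2, RH3.smul_mk]
      refine Prod.ext ?_ (by norm_num)
      funext i; fin_cases i <;> simp [H3.smul_apply] <;> erw [H3.smul_apply] <;> simp
    have hbr01 : ⁅bas 0, bas 1⁆ = bas 2 := by
      erw [hb0, hb1, hb2, bracket_def]
      refine Prod.ext ?_ rfl
      funext i; fin_cases i <;> norm_num
    have hbr_right : ∀ m : RH3, ⁅m, bas 1⁆ = (m.1 0) • bas 2 := by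
      intro m
      erw [hb1, hsmul2, bracket_def]
      refine Prod.ext ?_ rfl
      funext i; fin_cases i <;> norm_num
    have hbr_left : ∀ m : RH3, ⁅bas 0, m⁆ = (m.1 1) • bas 2 := by
      intro m
      erw [hb0, hsmul2, bracket_def]
      refine Prod.ext ?_ rfl
      funext i; fin_cases i <;> norm_num
    have hbr_right0 : ∀ m : RH3, ⁅m, bas 0⁆ = (-(m.1 1)) • bas 2 := by
      intro m
      erw [hb0, hsmul2, bracket_def]
      refine Prod.ext ?_ rfl
      funext i; fin_cases i <;> norm_num
    have hbr3 : ∀ m : RH3, ⁅bas 3, m⁆ = 0 := by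
      intro m
      erw [hb3, bracket_def]
      refine Prod.ext ?_ rfl
      funext i; fin_cases i <;> norm_num [H3.zero_apply] <;> rfl
    have hDe2 : L (bas 2) = (M 0 0 + M 1 1) • bas 2 := by
      have h := D.apply_lie_eq_add (bas 0) (bas 1)
      rw [hbr01] at h
      rw [show (D (bas 2) : RH3) = L (bas 2) from rfl] at h
      rw [h, hbr_left (D (bas 1)), hbr_right (D (bas 0)), ← add_smul]
      congr 1
      have h00 : M 0 0 = (L (bas 0)).1 0 := by rw [hM, toMatrix_entry]; rfl
      have h11 : M 1 1 = (L (bas 1)).1 1 := by rw [hM, toMatrix_entry]; rfl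
      rw [h00, h11]
      exact add_comm _ _
    have hD3 := D.apply_lie_eq_add (bas 3) (bas 0)
    rw [hbr3 (bas 0), map_zero, hbr3 (D (bas 0)), hbr_right0 (D (bas 3)), zero_add] at hD3
    have hD3' := D.apply_lie_eq_add (bas 3) (bas 1)
    rw [hbr3 (bas 1), map_zero, hbr3 (D (bas 1)), hbr_right (D (bas 3)), zero_add] at hD3'
    have hsm : ∀ r : ℝ, r • bas 2 = 0 → r = 0 := by
      intro r hr
      rw [hsmul2] at hr
      have h := congrArg (fun z : RH3 => z.1 2) hr
      simpa [RH3.fst_zero, H3.zero_apply] using h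
    have hc1 : (D (bas 3) : RH3).1 1 = 0 := by
      have h := hsm _ hD3.symm
      linarith [h]
    have hc0 : (D (bas 3) : RH3).1 0 = 0 := hsm _ hD3'.symm
    have col2 : ∀ i, M i 2 = (M 0 0 + M 1 1) * (phi (bas 2) i) := by
      intro i
      rw [hM, toMatrix_entry, hDe2, map_smul]
      rfl
    have e2c : phi (bas 2) = ![0,0,1,0] := by
      erw [hb2, phi_apply]; funext j; fin_cases j <;> norm_num <;> simp
    have h02 : M 0 2 = 0 := by rw [col2 0, e2c]; norm_num
    have h12 : M 1 2 = 0 := by rw [col2 1, e2c]; norm_num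
    have h32 : M 3 2 = 0 := by rw [col2 3, e2c]; norm_num <;> simp
    have h22 : M 2 2 = M 0 0 + M 1 1 := by rw [col2 2, e2c]; norm_num <;> simp
    have h03 : M 0 3 = 0 := by rw [hM, toMatrix_entry]; exact hc0
    have h13 : M 1 3 = 0 := by rw [hM, toMatrix_entry]; exact hc1
    have hMeq : M = !![M 0 0, M 0 1, 0, 0; M 1 0, M 1 1, 0, 0;
        M 2 0, M 2 1, M 0 0 + M 1 1, M 2 3; M 3 0, M 3 1, 0, M 3 3] := by
      ext i j
      fin_cases i <;> fin_cases j <;>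
        first
          | rfl
          | exact h02 | exact h12 | exact h32 | exact h22 | exact h03 | exact h13
    refine ⟨M 0 0 + M 1 1, M 3 3, M 0 0 * M 1 1 - M 0 1 * M 1 0, ?_⟩
    have hcp : M.charpoly = f := by
      rw [hM, LinearMap.charpoly_toMatrix, hD]
    rw [← hcp]
    conv_lhs => rw [hMeq]
    rw [charpoly_formula (M 0 0) (M 1 0) (M 0 1) (M 1 1) (M 2 0) (M 3 0) (M 2 1) (M 3 1)
      (M 2 3) (M 3 3)]
  · rintro ⟨s, v, p, hf⟩
    refine ⟨⟨Dmap s v p, Dmap_leibniz s v p⟩, ?_⟩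
    show (Dmap s v p).charpoly = f
    rw [← LinearMap.charpoly_toMatrix (Dmap s v p) bas]
    have c0 : phi (Dmap s v p (bas 0)) = ![0,1,0,0] := by
      erw [show bas 0 = ((![1,0,0] : H3), (0:ℝ)) from bas_apply 0, Dmap_apply, phi_apply]
      funext k; fin_cases k <;> norm_num <;> simp
    have c1 : phi (Dmap s v p (bas 1)) = ![-p,s,0,0] := by
      erw [show bas 1 = ((![0,1,0] : H3), (0:ℝ)) from bas_apply 1, Dmap_apply, phi_apply]
      funext k; fin_cases k <;> norm_num <;> simp
    have c2 : phi (Dmap s v p (bas 2)) = ![0,0,s,0] := by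
      erw [show bas 2 = ((![0,0,1] : H3), (0:ℝ)) from bas_apply 2, Dmap_apply, phi_apply]
      funext k; fin_cases k <;> norm_num <;> simp
    have c3 : phi (Dmap s v p (bas 3)) = ![0,0,0,v] := by
      erw [show bas 3 = ((0 : H3), (1:ℝ)) from bas_apply 3, Dmap_apply, phi_apply]
      funext k; fin_cases k <;> norm_num [H3.zero_apply] <;> simp
    have hMeq : LinearMap.toMatrix bas bas (Dmap s v p)
        = !![0,-p,0,0; 1,s,0,0; 0,0,0+s,0; 0,0,0,v] := by
      ext i j
      rw [toMatrix_entry]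
      fin_cases j <;> fin_cases i <;>
        first
          | exact congrFun c0 _ | exact congrFun c1 _
          | exact congrFun c2 _ | exact congrFun c3 _
          | exact (congrFun c2 _).trans (zero_add s).symm
    rw [hMeq, charpoly_formula 0 1 (-p) s 0 0 0 0 0 v, hf]
    have : ((0:ℝ) * s - -p * 1) = p := by ring
    rw [this, zero_add]
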